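/- Let U₁, U₂, U₃ be convex open subsets of ℝ² such that each pairwise intersection U_i ∩ U_j is nonempty and the union U₁ ∪ U₂ ∪ U₃ is simply connected. Then U₁ ∩ U₂ ∩ U₃ ≠ ∅. -/

import Mathlib

open Set unitInterval Filter Topology

local notation "𝕋" => AddCircle (1:ℝ)

noncomputable section

lemma coe_T_eq (x y : ℝ) : (x : 𝕋) = (y : 𝕋) ↔ ∃ n : ℤ, y = x + n := by
  rw [eq_comm, show ((y:𝕋) = (x:𝕋) ↔ ((y - x : ℝ) : 𝕋) = 0) by
    rw [AddCircle.coe_sub, sub_eq_zero], AddCircle.coe_eq_zero_iff]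
  constructor
  · rintro ⟨n, hn⟩; exact ⟨n, by simp at hn; linarith⟩
  · rintro ⟨n, hn⟩; exact ⟨n, by simp; linarith⟩

lemma norm_half : ‖((-(1/2):ℝ) : 𝕋)‖ = 1/2 := by
  rw [(AddCircle.norm_coe_eq_abs_iff (p := (1:ℝ)) (by norm_num)).2 (by rw [abs_neg, abs_of_pos]; norm_num; norm_num)]; norm_num

noncomputable def vv (z : 𝕋) : ℝ := ((AddCircle.equivIoc (1:ℝ) (-(1/2)) z : Ioc _ _) : ℝ)

lemma vv_coe (z : 𝕋) : ((vv z : ℝ) : 𝕋) = z := by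
  have := (AddCircle.equivIoc (1:ℝ) (-(1/2))).symm_apply_apply z
  exact this

lemma vv_contAt {z : 𝕋} (hz : ‖z‖ < 1/2) : ContinuousAt vv z := by
  have hne : z ≠ ((-(1/2):ℝ) : 𝕋) := by
    intro h; rw [h, norm_half] at hz; linarith
  exact continuous_subtype_val.continuousAt.comp (AddCircle.continuousAt_equivIoc 1 (-(1/2)) hne)



lemma coe_T_sum (s : Finset ℕ) (f : ℕ → ℝ) :
    ((∑ k ∈ s, f k : ℝ) : 𝕋) = ∑ k ∈ s, ((f k : ℝ) : 𝕋) :=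
  map_sum (QuotientAddGroup.mk' (AddSubgroup.zmultiples (1:ℝ))) f s

lemma min_mul_abs_le {a b t : ℝ} (ha : 0 ≤ a) (hab : a ≤ b) (ht : 0 ≤ t) (ht1 : t ≤ 1) :
    |min b 1 * t - min a 1 * t| ≤ b - a := by
  have h1 : min a 1 ≤ min b 1 := min_le_min hab le_rfl
  have h2 : min b 1 - min a 1 ≤ b - a := by
    rcases le_total a 1 with h | h
    · rw [min_eq_left h]; linarith [min_le_left b 1]
    · rw [min_eq_right h, min_eq_right (le_trans h hab)]; linarith
  rw [← sub_mul, abs_of_nonneg (mul_nonneg (by linarith) ht)]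
  calc (min b 1 - min a 1) * t ≤ (min b 1 - min a 1) * 1 := by nlinarith
    _ ≤ b - a := by linarith

lemma square_lift (G : I × I → 𝕋) (hG : Continuous G) :
    ∃ L : I × I → ℝ, Continuous L ∧ ∀ x, ((L x : ℝ) : 𝕋) = G x := by
  obtain ⟨δ, hδ, hδ'⟩ := Metric.uniformContinuous_iff.mp
    (CompactSpace.uniformContinuous_of_continuous hG) (1/4) (by norm_num)
  obtain ⟨N, hNpos, h1N⟩ : ∃ N : ℕ, (0:ℝ) < N ∧ (1:ℝ)/N < δ := by
    obtain ⟨n, hn⟩ := exists_nat_one_div_lt hδ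
    exact ⟨n + 1, by positivity, by push_cast; exact hn⟩
  have hmem : ∀ (k : ℕ) (t : I), min ((k:ℝ)/N) 1 * (t:ℝ) ∈ Icc (0:ℝ) 1 := by
    intro k t
    refine ⟨mul_nonneg (le_min (by positivity) zero_le_one) t.2.1, ?_⟩
    calc min ((k:ℝ)/N) 1 * (t:ℝ) ≤ 1 * 1 :=
          mul_le_mul (min_le_right _ _) t.2.2 t.2.1 zero_le_one
      _ = 1 := by norm_num
  set mul : ℕ → I → I := fun k t => ⟨min ((k:ℝ)/N) 1 * (t:ℝ), hmem k t⟩ with hmul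
  set c : ℕ → I × I → I × I := fun k x => (mul k x.1, mul k x.2) with hc
  have hc0 : ∀ x, c 0 x = (0, 0) := by
    intro x
    have h : ∀ t : I, mul 0 t = 0 := fun t => Subtype.ext (by simp [hmul])
    rw [hc]; exact Prod.ext (h _) (h _)
  have hcN : ∀ x, c N x = x := by
    intro x
    have h : ∀ t : I, mul N t = t := fun t => Subtype.ext (by
      simp [hmul, div_self (ne_of_gt hNpos)])
    rw [hc]; exact Prod.ext (h _) (h _)
  have hcont : ∀ k, Continuous (c k) := by
    intro k
    have h1 : Continuous (fun t : I => mul k t) :=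
      Continuous.subtype_mk (continuous_const.mul continuous_subtype_val) _
    exact (h1.comp continuous_fst).prodMk (h1.comp continuous_snd)
  have hdist : ∀ (k : ℕ) (x : I × I), dist (c (k+1) x) (c k x) < δ := by
    intro k x
    have key : ∀ t : I, dist (mul (k+1) t) (mul k t) ≤ 1/N := by
      intro t
      rw [Subtype.dist_eq]
      show |min (((k+1:ℕ):ℝ)/N) 1 * (t:ℝ) - min ((k:ℝ)/N) 1 * (t:ℝ)| ≤ 1/N
      rw [Nat.cast_add, Nat.cast_one]
      have := min_mul_abs_le (a := (k:ℝ)/N) (b := ((k:ℝ)+1)/N)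
        (by positivity) (by gcongr; linarith) t.2.1 t.2.2
      calc |min (((k:ℝ)+1)/N) 1 * (t:ℝ) - min ((k:ℝ)/N) 1 * (t:ℝ)|
          ≤ ((k:ℝ)+1)/N - (k:ℝ)/N := this
        _ = 1/N := by field_simp; ring
    calc dist (c (k+1) x) (c k x)
        = max (dist (mul (k+1) x.1) (mul k x.1)) (dist (mul (k+1) x.2) (mul k x.2)) := by
          rw [hc]; exact Prod.dist_eq
      _ ≤ 1/N := max_le (key _) (key _)
      _ < δ := h1N
  have hsmall : ∀ (k : ℕ) (x : I × I), ‖G (c (k+1) x) - G (c k x)‖ < 1/4 := by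
    intro k x
    rw [← dist_eq_norm]
    exact hδ' (hdist k x)
  set L : I × I → ℝ := fun x =>
    vv (G (0, 0)) + ∑ k ∈ Finset.range N, vv (G (c (k+1) x) - G (c k x)) with hL
  have hterm : ∀ k, Continuous fun x : I × I => vv (G (c (k+1) x) - G (c k x)) := by
    intro k
    rw [continuous_iff_continuousAt]
    intro x
    have hin : ContinuousAt (fun y : I × I => G (c (k+1) y) - G (c k y)) x :=
      ((hG.comp (hcont (k+1))).sub (hG.comp (hcont k))).continuousAt
    exact ContinuousAt.comp (g := vv) (vv_contAt (lt_trans (hsmall k x) (by norm_num))) hin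
  refine ⟨L, ?_, ?_⟩
  · exact continuous_const.add (continuous_finset_sum _ fun k _ => hterm k)
  · intro x
    rw [hL]
    simp only
    rw [AddCircle.coe_add, coe_T_sum, vv_coe]
    have : ∀ k ∈ Finset.range N, ((vv (G (c (k+1) x) - G (c k x)) : ℝ) : 𝕋)
        = G (c (k+1) x) - G (c k x) := fun k _ => vv_coe _
    rw [Finset.sum_congr rfl this, Finset.sum_range_sub (f := fun k => G (c k x)), hcN, hc0]
    abel


lemma int_eq_of_casts {n m : ℤ} (h1 : (n:ℝ) < (m:ℝ) + 1) (h2 : (m:ℝ) < (n:ℝ) + 1) : n = m := by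
  have h1' : n < m + 1 := by exact_mod_cast h1
  have h2' : m < n + 1 := by exact_mod_cast h2
  omega

lemma const_of_int_valued {f : ℝ → ℝ} {a b : ℝ} (hab : a ≤ b)
    (hf : ContinuousOn f (Icc a b)) (h : ∀ t ∈ Icc a b, ∃ n : ℤ, f t = n) :
    f a = f b := by
  obtain ⟨na, hna⟩ := h a (left_mem_Icc.2 hab)
  obtain ⟨nb, hnb⟩ := h b (right_mem_Icc.2 hab)
  rcases lt_trichotomy na nb with hlt | heq | hgt
  · exfalso
    have hv : ((nb:ℝ) - 1/2) ∈ Icc (f a) (f b) := by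
      constructor
      · have h' : (na:ℝ) + 1 ≤ nb := by exact_mod_cast hlt
        rw [hna]; linarith
      · rw [hnb]; linarith
    obtain ⟨t, _, ht⟩ := intermediate_value_Icc hab hf hv
    obtain ⟨n, hn⟩ := h t ‹_›
    rw [hn] at ht
    have : (2*n : ℝ) = 2*nb - 1 := by linarith
    have : (2*n : ℤ) = 2*nb - 1 := by exact_mod_cast this
    omega
  · rw [hna, hnb, heq]
  · exfalso
    have hv : ((na:ℝ) - 1/2) ∈ Icc (f b) (f a) := by
      constructor
      · have h' : (nb:ℝ) + 1 ≤ na := by exact_mod_cast hgt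
        rw [hnb]; linarith
      · rw [hna]; linarith
    obtain ⟨t, _, ht⟩ := intermediate_value_Icc' hab hf hv
    obtain ⟨n, hn⟩ := h t ‹_›
    rw [hn] at ht
    have : (2*n : ℝ) = 2*na - 1 := by linarith
    have : (2*n : ℤ) = 2*na - 1 := by exact_mod_cast this
    omega

lemma window_lemma {f : ℝ → ℝ} {a b c : ℝ} (hab : a ≤ b)
    (hf : ContinuousOn f (Icc a b))
    (h : ∀ t ∈ Icc a b, ∃ n : ℤ, f t ∈ Ioo (c + n) (c + n + 2/3))
    {na nb : ℤ} (hfa : f a ∈ Ioo (c + na) (c + na + 2/3))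
    (hfb : f b ∈ Ioo (c + nb) (c + nb + 2/3)) : na = nb := by
  rcases lt_trichotomy na nb with hlt | heq | hgt
  · exfalso
    have hcast : (na:ℝ) + 1 ≤ nb := by exact_mod_cast hlt
    have hv : (c + na + 2/3) ∈ Icc (f a) (f b) := by
      exact ⟨le_of_lt hfa.2, by have := hfb.1; linarith⟩
    obtain ⟨t, _, ht⟩ := intermediate_value_Icc hab hf hv
    obtain ⟨n, hn1, hn2⟩ := h t ‹_›
    rw [ht] at hn1 hn2
    -- c + n < c + na + 2/3 < c + n + 2/3  ⇒  na < n < na + 2/3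
    have : n = na := int_eq_of_casts (by linarith) (by linarith)
    rw [this] at hn2; linarith
  · exact heq
  · exfalso
    have hcast : (nb:ℝ) + 1 ≤ na := by exact_mod_cast hgt
    have hv : (c + nb + 2/3) ∈ Icc (f b) (f a) := by
      exact ⟨le_of_lt hfb.2, by have := hfa.1; linarith⟩
    obtain ⟨t, _, ht⟩ := intermediate_value_Icc' hab hf hv
    obtain ⟨n, hn1, hn2⟩ := h t ‹_›
    rw [ht] at hn1 hn2
    have : n = nb := int_eq_of_casts (by linarith) (by linarith)
    rw [this] at hn2; linarith



abbrev Om (U : Fin 3 → Set (Fin 2 → ℝ)) : Type := ↥(U 0 ∪ U 1 ∪ U 2)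

def fF (U : Fin 3 → Set (Fin 2 → ℝ)) (i : Fin 3) (z : Om U) : ℝ :=
  Metric.infDist z.val (U i)ᶜ

def gG (U : Fin 3 → Set (Fin 2 → ℝ)) (z : Om U) : ℝ :=
  fF U 0 z + fF U 1 z + fF U 2 z

def bB (U : Fin 3 → Set (Fin 2 → ℝ)) (i : Fin 3) (z : Om U) : ℝ := fF U i z / gG U z

def HH (U : Fin 3 → Set (Fin 2 → ℝ)) (z : Om U) : 𝕋 :=
  if fF U 1 z = 0 then ((-(bB U 2 z)/3 : ℝ) : 𝕋)
  else if fF U 2 z = 0 then ((bB U 1 z/3 : ℝ) : 𝕋)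
  else (((1 + bB U 2 z)/3 : ℝ) : 𝕋)

variable {U : Fin 3 → Set (Fin 2 → ℝ)}

lemma fF_cont (i : Fin 3) : Continuous (fF U i) :=
  (Metric.continuous_infDist_pt _).comp continuous_subtype_val

lemma fF_nonneg (i : Fin 3) (z : Om U) : 0 ≤ fF U i z := Metric.infDist_nonneg

lemma fF_pos_iff (hopen : ∀ i, IsOpen (U i)) (hcompl : ∀ i, ((U i)ᶜ).Nonempty)
    (i : Fin 3) (z : Om U) : 0 < fF U i z ↔ z.val ∈ U i := by
  unfold fF
  rw [← ((hopen i).isClosed_compl.notMem_iff_infDist_pos (hcompl i))]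
  simp [fF]

lemma fF_eq_zero_iff (hopen : ∀ i, IsOpen (U i)) (hcompl : ∀ i, ((U i)ᶜ).Nonempty)
    (i : Fin 3) (z : Om U) : fF U i z = 0 ↔ z.val ∉ U i := by
  constructor
  · intro h hz
    have := (fF_pos_iff hopen hcompl i z).2 hz
    linarith
  · intro h
    rcases eq_or_lt_of_le (fF_nonneg i z) with h' | h'
    · exact h'.symm
    · exact absurd ((fF_pos_iff hopen hcompl i z).1 h') h

lemma gG_pos (hopen : ∀ i, IsOpen (U i)) (hcompl : ∀ i, ((U i)ᶜ).Nonempty)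
    (z : Om U) : 0 < gG U z := by
  have h0 := fF_nonneg (U := U) 0 z
  have h1 := fF_nonneg (U := U) 1 z
  have h2 := fF_nonneg (U := U) 2 z
  rcases z.2 with (h | h) | h
  · have := (fF_pos_iff hopen hcompl 0 z).2 h; unfold gG; linarith
  · have := (fF_pos_iff hopen hcompl 1 z).2 h; unfold gG; linarith
  · have := (fF_pos_iff hopen hcompl 2 z).2 h; unfold gG; linarith

lemma bB_cont (hopen : ∀ i, IsOpen (U i)) (hcompl : ∀ i, ((U i)ᶜ).Nonempty)
    (i : Fin 3) : Continuous (bB U i) := by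
  have : Continuous (gG U) := ((fF_cont 0).add (fF_cont 1)).add (fF_cont 2)
  exact (fF_cont i).div this (fun z => ne_of_gt (gG_pos hopen hcompl z))

lemma bB_nonneg (hopen : ∀ i, IsOpen (U i)) (hcompl : ∀ i, ((U i)ᶜ).Nonempty)
    (i : Fin 3) (z : Om U) : 0 ≤ bB U i z :=
  div_nonneg (fF_nonneg i z) (le_of_lt (gG_pos hopen hcompl z))

lemma bB_sum (hopen : ∀ i, IsOpen (U i)) (hcompl : ∀ i, ((U i)ᶜ).Nonempty)
    (z : Om U) : bB U 0 z + bB U 1 z + bB U 2 z = 1 := by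
  unfold bB
  rw [← add_div, ← add_div]
  exact div_self (ne_of_gt (gG_pos hopen hcompl z))

lemma bB_pos_iff (hopen : ∀ i, IsOpen (U i)) (hcompl : ∀ i, ((U i)ᶜ).Nonempty)
    (i : Fin 3) (z : Om U) : 0 < bB U i z ↔ z.val ∈ U i := by
  rw [← fF_pos_iff hopen hcompl i z]
  unfold bB
  constructor
  · intro h
    rcases eq_or_lt_of_le (fF_nonneg i z) with h' | h'
    · rw [← h'] at h; simp at h
    · exact h'
  · intro h; exact div_pos h (gG_pos hopen hcompl z)

lemma bB_eq_zero_of (i : Fin 3) (z : Om U) (h : fF U i z = 0) : bB U i z = 0 := by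
  unfold bB; rw [h, zero_div]

lemma bB_le_one (hopen : ∀ i, IsOpen (U i)) (hcompl : ∀ i, ((U i)ᶜ).Nonempty)
    (i : Fin 3) (z : Om U) : bB U i z ≤ 1 := by
  have h0 := bB_nonneg hopen hcompl 0 z
  have h1 := bB_nonneg hopen hcompl 1 z
  have h2 := bB_nonneg hopen hcompl 2 z
  have hs := bB_sum hopen hcompl z
  fin_cases i
  · show bB U 0 z ≤ 1; linarith
  · show bB U 1 z ≤ 1; linarith
  · show bB U 2 z ≤ 1; linarith

lemma zero_exists (hopen : ∀ i, IsOpen (U i)) (hcompl : ∀ i, ((U i)ᶜ).Nonempty)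
    (htriple : U 0 ∩ U 1 ∩ U 2 = ∅) (z : Om U) :
    fF U 0 z = 0 ∨ fF U 1 z = 0 ∨ fF U 2 z = 0 := by
  by_contra h
  push_neg at h
  obtain ⟨h0, h1, h2⟩ := h
  have m0 := (fF_pos_iff hopen hcompl 0 z).1 (lt_of_le_of_ne (fF_nonneg 0 z) (Ne.symm h0))
  have m1 := (fF_pos_iff hopen hcompl 1 z).1 (lt_of_le_of_ne (fF_nonneg 1 z) (Ne.symm h1))
  have m2 := (fF_pos_iff hopen hcompl 2 z).1 (lt_of_le_of_ne (fF_nonneg 2 z) (Ne.symm h2))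
  have : z.val ∈ U 0 ∩ U 1 ∩ U 2 := ⟨⟨m0, m1⟩, m2⟩
  rw [htriple] at this
  exact this

lemma ag12 (z : Om U) (h1 : fF U 1 z = 0) (h2 : fF U 2 z = 0) :
    ((-(bB U 2 z)/3 : ℝ) : 𝕋) = ((bB U 1 z/3 : ℝ) : 𝕋) := by
  rw [bB_eq_zero_of 1 z h1, bB_eq_zero_of 2 z h2]
  norm_num

lemma ag10 (hopen : ∀ i, IsOpen (U i)) (hcompl : ∀ i, ((U i)ᶜ).Nonempty)
    (z : Om U) (h1 : fF U 1 z = 0) (h0 : fF U 0 z = 0) :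
    ((-(bB U 2 z)/3 : ℝ) : 𝕋) = (((1 + bB U 2 z)/3 : ℝ) : 𝕋) := by
  have hb2 : bB U 2 z = 1 := by
    have := bB_sum hopen hcompl z
    rw [bB_eq_zero_of 0 z h0, bB_eq_zero_of 1 z h1] at this
    linarith
  rw [hb2, coe_T_eq]
  exact ⟨1, by norm_num⟩

lemma ag20 (hopen : ∀ i, IsOpen (U i)) (hcompl : ∀ i, ((U i)ᶜ).Nonempty)
    (z : Om U) (h2 : fF U 2 z = 0) (h0 : fF U 0 z = 0) :
    ((bB U 1 z/3 : ℝ) : 𝕋) = (((1 + bB U 2 z)/3 : ℝ) : 𝕋) := by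
  have hb1 : bB U 1 z = 1 := by
    have := bB_sum hopen hcompl z
    rw [bB_eq_zero_of 0 z h0, bB_eq_zero_of 2 z h2] at this
    linarith
  rw [hb1, bB_eq_zero_of 2 z h2]
  norm_num

lemma HH_eq1 (z : Om U) (h1 : fF U 1 z = 0) : HH U z = ((-(bB U 2 z)/3 : ℝ) : 𝕋) := by
  unfold HH; rw [if_pos h1]

lemma HH_eq2 (z : Om U) (h2 : fF U 2 z = 0) : HH U z = ((bB U 1 z/3 : ℝ) : 𝕋) := by
  unfold HH
  by_cases h1 : fF U 1 z = 0
  · rw [if_pos h1]; exact ag12 z h1 h2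
  · rw [if_neg h1, if_pos h2]

lemma HH_eq0 (hopen : ∀ i, IsOpen (U i)) (hcompl : ∀ i, ((U i)ᶜ).Nonempty)
    (z : Om U) (h0 : fF U 0 z = 0) : HH U z = (((1 + bB U 2 z)/3 : ℝ) : 𝕋) := by
  unfold HH
  by_cases h1 : fF U 1 z = 0
  · rw [if_pos h1]; exact ag10 hopen hcompl z h1 h0
  · by_cases h2 : fF U 2 z = 0
    · rw [if_neg h1, if_pos h2]; exact ag20 hopen hcompl z h2 h0
    · rw [if_neg h1, if_neg h2]

lemma HH_cont (hopen : ∀ i, IsOpen (U i)) (hcompl : ∀ i, ((U i)ᶜ).Nonempty)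
    (htriple : U 0 ∩ U 1 ∩ U 2 = ∅) : Continuous (HH U) := by
  have hq : Continuous ((↑) : ℝ → 𝕋) := AddCircle.continuous_mk' 1
  have hr1 : Continuous fun z : Om U => ((-(bB U 2 z)/3 : ℝ) : 𝕋) :=
    hq.comp (((bB_cont hopen hcompl 2).neg).div_const 3)
  have hr2 : Continuous fun z : Om U => ((bB U 1 z/3 : ℝ) : 𝕋) :=
    hq.comp ((bB_cont hopen hcompl 1).div_const 3)
  have hr0 : Continuous fun z : Om U => (((1 + bB U 2 z)/3 : ℝ) : 𝕋) :=
    hq.comp ((continuous_const.add (bB_cont hopen hcompl 2)).div_const 3)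
  rw [continuous_iff_continuousAt]
  intro z
  intro V hV
  rw [Filter.mem_map]
  have hVz : ∀ (r : Om U → 𝕋), Continuous r → HH U z = r z → ∀ᶠ w in 𝓝 z, r w ∈ V := by
    intro r hr hz
    exact hr.continuousAt (by rwa [← hz])
  have p : ∀ i : Fin 3, ∀ᶠ w in 𝓝 z, fF U i z ≠ 0 → fF U i w ≠ 0 := by
    intro i
    by_cases h : fF U i z = 0
    · filter_upwards with w h'
      exact absurd h h'
    · have hpos : 0 < fF U i z := lt_of_le_of_ne (fF_nonneg i z) (Ne.symm h)
      have hev : ∀ᶠ w in 𝓝 z, 0 < fF U i w :=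
        (isOpen_lt continuous_const (fF_cont i)).mem_nhds hpos
      filter_upwards [hev] with w hw _
      exact ne_of_gt hw
  have e1 : ∀ᶠ w in 𝓝 z, fF U 1 z = 0 → ((-(bB U 2 w)/3 : ℝ) : 𝕋) ∈ V := by
    by_cases h : fF U 1 z = 0
    · filter_upwards [hVz _ hr1 (HH_eq1 z h)] with w hw _; exact hw
    · filter_upwards with w hw; exact absurd hw h
  have e2 : ∀ᶠ w in 𝓝 z, fF U 2 z = 0 → ((bB U 1 w/3 : ℝ) : 𝕋) ∈ V := by
    by_cases h : fF U 2 z = 0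
    · filter_upwards [hVz _ hr2 (HH_eq2 z h)] with w hw _; exact hw
    · filter_upwards with w hw; exact absurd hw h
  have e0 : ∀ᶠ w in 𝓝 z, fF U 0 z = 0 → (((1 + bB U 2 w)/3 : ℝ) : 𝕋) ∈ V := by
    by_cases h : fF U 0 z = 0
    · filter_upwards [hVz _ hr0 (HH_eq0 hopen hcompl z h)] with w hw _; exact hw
    · filter_upwards with w hw; exact absurd hw h
  filter_upwards [e1, e2, e0, p 0, p 1, p 2] with w he1 he2 he0 hp0 hp1 hp2
  show HH U w ∈ V
  by_cases h1 : fF U 1 w = 0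
  · rw [HH_eq1 w h1]
    refine he1 ?_
    by_contra hne
    exact hp1 hne h1
  · by_cases h2 : fF U 2 w = 0
    · rw [HH_eq2 w h2]
      refine he2 ?_
      by_contra hne
      exact hp2 hne h2
    · have h0 : fF U 0 w = 0 := by
        rcases zero_exists hopen hcompl htriple w with h | h | h
        · exact h
        · exact absurd h h1
        · exact absurd h h2
      rw [HH_eq0 hopen hcompl w h0]
      refine he0 ?_
      by_contra hne
      exact hp0 hne h0

lemma HH_win1 (hopen : ∀ i, IsOpen (U i)) (hcompl : ∀ i, ((U i)ᶜ).Nonempty)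
    (htriple : U 0 ∩ U 1 ∩ U 2 = ∅) (z : Om U) (hz : z.val ∈ U 1) (x : ℝ)
    (hx : (x : 𝕋) = HH U z) : ∃ n : ℤ, x ∈ Ioo ((0:ℝ) + n) (0 + n + 2/3) := by
  have hb1 : 0 < bB U 1 z := (bB_pos_iff hopen hcompl 1 z).2 hz
  have hf1 : fF U 1 z ≠ 0 := ne_of_gt ((fF_pos_iff hopen hcompl 1 z).2 hz)
  have hb0 := bB_nonneg hopen hcompl 0 z
  have hb2 := bB_nonneg hopen hcompl 2 z
  have hb1le := bB_le_one hopen hcompl 1 z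
  have hsum := bB_sum hopen hcompl z
  rcases zero_exists hopen hcompl htriple z with h0 | h1 | h2
  · rw [HH_eq0 hopen hcompl z h0] at hx
    obtain ⟨n, hn⟩ := (coe_T_eq _ x).1 hx.symm
    have hb0z : bB U 0 z = 0 := bB_eq_zero_of 0 z h0
    refine ⟨n, ?_, ?_⟩ <;> rw [hn] <;> [linarith; linarith]
  · exact absurd h1 hf1
  · rw [HH_eq2 z h2] at hx
    obtain ⟨n, hn⟩ := (coe_T_eq _ x).1 hx.symm
    refine ⟨n, ?_, ?_⟩ <;> rw [hn] <;> [linarith; linarith]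

lemma HH_win2 (hopen : ∀ i, IsOpen (U i)) (hcompl : ∀ i, ((U i)ᶜ).Nonempty)
    (htriple : U 0 ∩ U 1 ∩ U 2 = ∅) (z : Om U) (hz : z.val ∈ U 2) (x : ℝ)
    (hx : (x : 𝕋) = HH U z) : ∃ n : ℤ, x ∈ Ioo ((1/3:ℝ) + n) (1/3 + n + 2/3) := by
  have hb2 : 0 < bB U 2 z := (bB_pos_iff hopen hcompl 2 z).2 hz
  have hf2 : fF U 2 z ≠ 0 := ne_of_gt ((fF_pos_iff hopen hcompl 2 z).2 hz)
  have hb0 := bB_nonneg hopen hcompl 0 z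
  have hb1 := bB_nonneg hopen hcompl 1 z
  have hb2le := bB_le_one hopen hcompl 2 z
  have hsum := bB_sum hopen hcompl z
  rcases zero_exists hopen hcompl htriple z with h0 | h1 | h2
  · rw [HH_eq0 hopen hcompl z h0] at hx
    obtain ⟨n, hn⟩ := (coe_T_eq _ x).1 hx.symm
    refine ⟨n, ?_, ?_⟩ <;> rw [hn] <;> [linarith; linarith]
  · rw [HH_eq1 z h1] at hx
    obtain ⟨n, hn⟩ := (coe_T_eq _ x).1 hx.symm
    refine ⟨n - 1, ?_, ?_⟩ <;> rw [hn] <;> push_cast <;> [linarith; linarith]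
  · exact absurd h2 hf2

lemma HH_win0 (hopen : ∀ i, IsOpen (U i)) (hcompl : ∀ i, ((U i)ᶜ).Nonempty)
    (htriple : U 0 ∩ U 1 ∩ U 2 = ∅) (z : Om U) (hz : z.val ∈ U 0) (x : ℝ)
    (hx : (x : 𝕋) = HH U z) : ∃ n : ℤ, x ∈ Ioo ((2/3:ℝ) + n) (2/3 + n + 2/3) := by
  have hb0 : 0 < bB U 0 z := (bB_pos_iff hopen hcompl 0 z).2 hz
  have hf0 : fF U 0 z ≠ 0 := ne_of_gt ((fF_pos_iff hopen hcompl 0 z).2 hz)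
  have hb1 := bB_nonneg hopen hcompl 1 z
  have hb2 := bB_nonneg hopen hcompl 2 z
  have hsum := bB_sum hopen hcompl z
  rcases zero_exists hopen hcompl htriple z with h0 | h1 | h2
  · exact absurd h0 hf0
  · rw [HH_eq1 z h1] at hx
    obtain ⟨n, hn⟩ := (coe_T_eq _ x).1 hx.symm
    have hb1z : bB U 1 z = 0 := bB_eq_zero_of 1 z h1
    refine ⟨n - 1, ?_, ?_⟩ <;> rw [hn] <;> push_cast <;> [linarith; linarith]
  · rw [HH_eq2 z h2] at hx
    obtain ⟨n, hn⟩ := (coe_T_eq _ x).1 hx.symm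
    have hb2z : bB U 2 z = 0 := bB_eq_zero_of 2 z h2
    refine ⟨n - 1, ?_, ?_⟩ <;> rw [hn] <;> push_cast <;> [linarith; linarith]

lemma seg_path {S W : Set (Fin 2 → ℝ)} (hconvS : Convex ℝ S) (hsub : S ⊆ W)
    (a b : ↥W) (hx : a.val ∈ S) (hy : b.val ∈ S) :
    ∃ p : Path a b, ∀ t, (p t).val ∈ S := by
  have hmem : ∀ t : I, (1 - (t:ℝ)) • a.val + (t:ℝ) • b.val ∈ S := fun t =>
    hconvS hx hy (by linarith [t.2.2]) t.2.1 (by ring)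
  refine ⟨{ toFun := fun t => ⟨(1 - (t:ℝ)) • a.val + (t:ℝ) • b.val, hsub (hmem t)⟩
            continuous_toFun := ?_
            source' := ?_
            target' := ?_ }, fun t => hmem t⟩
  · exact Continuous.subtype_mk
      (((continuous_const.sub continuous_subtype_val).smul continuous_const).add
        (continuous_subtype_val.smul continuous_const)) _
  · exact Subtype.ext (by norm_num)
  · exact Subtype.ext (by norm_num)

/-- Three convex open subsets of the plane with nonempty pairwise intersections and simply
connected union have a common point. -/
theorem inter_three_nonempty_of_simplyConnected (U : Fin 3 → Set (Fin 2 → ℝ))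
    (hconv : ∀ i, Convex ℝ (U i)) (hopen : ∀ i, IsOpen (U i))
    (hpair : ∀ i j, i ≠ j → (U i ∩ U j).Nonempty)
    (hsc : SimplyConnectedSpace ↥(U 0 ∪ U 1 ∪ U 2)) :
    (U 0 ∩ U 1 ∩ U 2).Nonempty := by
  by_cases hcompl : ∀ i, ((U i)ᶜ).Nonempty
  case neg =>
    push_neg at hcompl
    obtain ⟨i, hi⟩ := hcompl
    rw [Set.compl_empty_iff] at hi
    fin_cases i
    · obtain ⟨x, hx1, hx2⟩ := hpair 1 2 (by decide)
      exact ⟨x, ⟨⟨by simp at hi; rw [hi]; trivial, hx1⟩, hx2⟩⟩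
    · obtain ⟨x, hx0, hx2⟩ := hpair 0 2 (by decide)
      exact ⟨x, ⟨⟨hx0, by simp at hi; rw [hi]; trivial⟩, hx2⟩⟩
    · obtain ⟨x, hx0, hx1⟩ := hpair 0 1 (by decide)
      exact ⟨x, ⟨⟨hx0, hx1⟩, by simp at hi; rw [hi]; trivial⟩⟩
  case pos =>
  by_contra hne
  rw [Set.not_nonempty_iff_eq_empty] at hne
  -- choose points in pairwise intersections
  obtain ⟨P01, h01⟩ := hpair 0 1 (by decide)
  obtain ⟨P12, h12⟩ := hpair 1 2 (by decide)
  obtain ⟨P20, h20⟩ := hpair 2 0 (by decide)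
  have hsub1 : U 1 ⊆ U 0 ∪ U 1 ∪ U 2 := fun w hw => Or.inl (Or.inr hw)
  have hsub2 : U 2 ⊆ U 0 ∪ U 1 ∪ U 2 := fun w hw => Or.inr hw
  have hsub0 : U 0 ⊆ U 0 ∪ U 1 ∪ U 2 := fun w hw => Or.inl (Or.inl hw)
  set ω01 : Om U := ⟨P01, hsub1 h01.2⟩ with hw01
  set ω12 : Om U := ⟨P12, hsub1 h12.1⟩ with hw12
  set ω20 : Om U := ⟨P20, hsub2 h20.1⟩ with hw20
  obtain ⟨σ1, hσ1⟩ := seg_path (hconv 1) hsub1 ω01 ω12 h01.2 h12.1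
  obtain ⟨σ2, hσ2⟩ := seg_path (hconv 2) hsub2 ω12 ω20 h12.2 h20.1
  obtain ⟨σ3, hσ3⟩ := seg_path (hconv 0) hsub0 ω20 ω01 h20.2 h01.1
  set γ : Path ω01 ω01 := (σ1.trans σ2).trans σ3 with hγ
  have hseg1 : ∀ t : I, (t:ℝ) ≤ 1/4 → (γ t).val ∈ U 1 := by
    intro t ht
    rw [hγ, Path.trans_apply, dif_pos (show (t:ℝ) ≤ 1/2 by linarith), Path.trans_apply,
      dif_pos (show (((⟨2*(t:ℝ), by constructor <;> [linarith [t.2.1]; linarith]⟩ : I)):ℝ) ≤ 1/2 by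
        show 2*(t:ℝ) ≤ 1/2; linarith)]
    exact hσ1 _
  have hseg2 : ∀ t : I, 1/4 ≤ (t:ℝ) → (t:ℝ) ≤ 1/2 → (γ t).val ∈ U 2 := by
    intro t ht1 ht2
    rw [hγ, Path.trans_apply, dif_pos ht2, Path.trans_apply]
    by_cases h : (((⟨2*(t:ℝ), by constructor <;> [linarith [t.2.1]; linarith]⟩ : I)):ℝ) ≤ 1/2
    · rw [dif_pos h]
      have ht' : (t:ℝ) = 1/4 := by
        have h' : 2*(t:ℝ) ≤ 1/2 := h
        linarith
      have harg : ∀ u : I, (u:ℝ) = 1 → σ1 u = ω12 := by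
        intro u hu
        have : u = 1 := Subtype.ext hu
        rw [this]; exact σ1.target
      rw [harg _ (show 2*(2*(t:ℝ)) = 1 by rw [ht']; norm_num)]
      exact h12.2
    · rw [dif_neg h]
      exact hσ2 _
  have hseg3 : ∀ t : I, 1/2 ≤ (t:ℝ) → (γ t).val ∈ U 0 := by
    intro t ht
    rw [hγ, Path.trans_apply]
    by_cases h : (t:ℝ) ≤ 1/2
    · rw [dif_pos h]
      have harg : ∀ u : I, (u:ℝ) = 1 → (σ1.trans σ2) u = ω20 := by
        intro u hu
        have : u = 1 := Subtype.ext hu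
        rw [this]; exact (σ1.trans σ2).target
      rw [harg _ (show 2*(t:ℝ) = 1 by have : (t:ℝ) = 1/2 := le_antisymm h ht; rw [this]; norm_num)]
      exact h20.2
    · rw [dif_neg h]
      exact hσ3 _
  have hγ0 : γ 0 = ω01 := γ.source
  have hγ1 : γ 1 = ω01 := γ.target
  have hγ14 : γ ⟨1/4, by norm_num⟩ = ω12 := by
    rw [hγ, Path.trans_apply, dif_pos (show ((1:ℝ)/4) ≤ 1/2 by norm_num), Path.trans_apply,
      dif_pos (show 2*((1:ℝ)/4) ≤ 1/2 by norm_num)]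
    have harg : ∀ u : I, (u:ℝ) = 1 → σ1 u = ω12 := by
      intro u hu
      have : u = 1 := Subtype.ext hu
      rw [this]; exact σ1.target
    exact harg _ (show 2*(2*((1:ℝ)/4)) = 1 by norm_num)
  have hγ12 : γ ⟨1/2, by norm_num⟩ = ω20 := by
    rw [hγ, Path.trans_apply, dif_pos (show ((1:ℝ)/2) ≤ 1/2 by norm_num)]
    have harg : ∀ u : I, (u:ℝ) = 1 → (σ1.trans σ2) u = ω20 := by
      intro u hu
      have : u = 1 := Subtype.ext hu
      rw [this]; exact (σ1.trans σ2).target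
    exact harg _ (show 2*((1:ℝ)/2) = 1 by norm_num)
  -- homotopy to the constant path
  haveI := hsc
  obtain ⟨F⟩ := SimplyConnectedSpace.paths_homotopic γ (Path.refl ω01)
  have hHc : Continuous (HH U) := HH_cont hopen hcompl hne
  set G : I × I → 𝕋 := fun x => HH U (F x) with hG
  have hGc : Continuous G := hHc.comp F.continuous
  obtain ⟨L, hLc, hLq⟩ := square_lift G hGc
  have hF0 : ∀ t : I, F (0, t) = γ t := fun t => F.apply_zero t
  have hF1 : ∀ t : I, F (1, t) = ω01 := fun t => F.apply_one t
  have hFs0 : ∀ s : I, F (s, 0) = ω01 := fun s => F.source s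
  have hFs1 : ∀ s : I, F (s, 1) = ω01 := fun s => F.target s
  set pj : ℝ → I := Set.projIcc 0 1 zero_le_one with hpj
  have hpjc : Continuous pj := continuous_projIcc
  have hpjmem : ∀ (u : ℝ) (hu : u ∈ Icc (0:ℝ) 1), pj u = ⟨u, hu⟩ :=
    fun u hu => Set.projIcc_of_mem _ hu
  have hpj0 : pj 0 = 0 := hpjmem 0 ⟨le_refl 0, zero_le_one⟩
  have hpj1 : pj 1 = 1 := hpjmem 1 ⟨zero_le_one, le_refl 1⟩
  set ℓ : ℝ → ℝ := fun u => L (0, pj u) with hℓ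
  have hℓc : Continuous ℓ := hLc.comp (continuous_const.prodMk hpjc)
  have hqℓ : ∀ (u : ℝ) (hu : u ∈ Icc (0:ℝ) 1), ((ℓ u : ℝ) : 𝕋) = HH U (γ ⟨u, hu⟩) := by
    intro u hu
    rw [hℓ]
    simp only
    rw [hLq (0, pj u), hG]
    simp only
    rw [hpjmem u hu, hF0]
  have hqI : ∀ (u : ℝ) (hu : u ∈ Icc (0:ℝ) 1) (w : Om U), γ ⟨u, hu⟩ = w →
      ((ℓ u : ℝ) : 𝕋) = HH U w := by
    intro u hu w hw
    rw [hqℓ u hu, hw]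
  -- the homotopy end difference is an integer, constant, and zero at s = 1
  set dd : ℝ → ℝ := fun s => L (pj s, 1) - L (pj s, 0) with hdd
  have hddc : Continuous dd :=
    (hLc.comp (hpjc.prodMk continuous_const)).sub (hLc.comp (hpjc.prodMk continuous_const))
  have hddint : ∀ s ∈ Icc (0:ℝ) 1, ∃ n : ℤ, dd s = n := by
    intro s _
    have hz : ((dd s : ℝ) : 𝕋) = 0 := by
      rw [hdd]
      simp only
      rw [AddCircle.coe_sub, hLq, hLq, hG]
      simp only
      rw [hFs1, hFs0, sub_self]
    rw [AddCircle.coe_eq_zero_iff] at hz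
    obtain ⟨n, hn⟩ := hz
    exact ⟨n, by rw [← hn]; simp⟩
  have hd01 : dd 0 = dd 1 := const_of_int_valued zero_le_one hddc.continuousOn hddint
  have heeint : ∀ u ∈ Icc (0:ℝ) 1, ∃ n : ℤ, (L (1, pj u) - L (1, pj 0)) = n := by
    intro u _
    have hz : ((L (1, pj u) - L (1, pj 0) : ℝ) : 𝕋) = 0 := by
      rw [AddCircle.coe_sub, hLq, hLq, hG]
      simp only
      rw [hF1, hF1, sub_self]
    rw [AddCircle.coe_eq_zero_iff] at hz
    obtain ⟨n, hn⟩ := hz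
    exact ⟨n, by rw [← hn]; simp⟩
  have hee : Continuous fun u : ℝ => L (1, pj u) - L (1, pj 0) :=
    (hLc.comp (continuous_const.prodMk hpjc)).sub continuous_const
  have hee01 := const_of_int_valued zero_le_one hee.continuousOn heeint
  simp only [sub_self] at hee01
  -- dd 1 = 0
  have hdd1 : dd 1 = 0 := by
    rw [hdd]
    simp only
    rw [hpj1] at hee01
    rw [hpj1, ← hpj0]
    linarith
  have hℓeq : ℓ 1 = ℓ 0 := by
    have hdd0 : dd 0 = 0 := by rw [hd01, hdd1]
    rw [hdd] at hdd0
    simp only at hdd0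
    rw [hpj0] at hdd0
    rw [hℓ]
    simp only
    rw [hpj1, hpj0]
    linarith
  -- endpoint values of HH
  have hbsum01 := bB_sum hopen hcompl ω01
  have hb0pos01 : 0 < bB U 0 ω01 := (bB_pos_iff hopen hcompl 0 ω01).2 h01.1
  have hb1pos01 : 0 < bB U 1 ω01 := (bB_pos_iff hopen hcompl 1 ω01).2 h01.2
  have hb2nn01 := bB_nonneg hopen hcompl 2 ω01
  have hf2w01 : fF U 2 ω01 = 0 := by
    rcases zero_exists hopen hcompl hne ω01 with h | h | h
    · exact absurd h (ne_of_gt ((fF_pos_iff hopen hcompl 0 ω01).2 h01.1))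
    · exact absurd h (ne_of_gt ((fF_pos_iff hopen hcompl 1 ω01).2 h01.2))
    · exact h
  set α : ℝ := bB U 1 ω01 / 3 with hαdef
  have hHω01 : HH U ω01 = ((α : ℝ) : 𝕋) := HH_eq2 ω01 hf2w01
  have hα1 : 0 < α := by rw [hαdef]; linarith
  have hα2 : α < 1/3 := by rw [hαdef]; linarith
  have hbsum12 := bB_sum hopen hcompl ω12
  have hb1pos12 : 0 < bB U 1 ω12 := (bB_pos_iff hopen hcompl 1 ω12).2 h12.1
  have hb2pos12 : 0 < bB U 2 ω12 := (bB_pos_iff hopen hcompl 2 ω12).2 h12.2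
  have hb0nn12 := bB_nonneg hopen hcompl 0 ω12
  have hf0w12 : fF U 0 ω12 = 0 := by
    rcases zero_exists hopen hcompl hne ω12 with h | h | h
    · exact h
    · exact absurd h (ne_of_gt ((fF_pos_iff hopen hcompl 1 ω12).2 h12.1))
    · exact absurd h (ne_of_gt ((fF_pos_iff hopen hcompl 2 ω12).2 h12.2))
  set β : ℝ := (1 + bB U 2 ω12)/3 with hβdef
  have hHω12 : HH U ω12 = ((β : ℝ) : 𝕋) := HH_eq0 hopen hcompl ω12 hf0w12
  have hβ1 : 1/3 < β := by rw [hβdef]; linarith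
  have hβ2 : β < 2/3 := by rw [hβdef]; linarith
  have hbsum20 := bB_sum hopen hcompl ω20
  have hb2pos20 : 0 < bB U 2 ω20 := (bB_pos_iff hopen hcompl 2 ω20).2 h20.1
  have hb0pos20 : 0 < bB U 0 ω20 := (bB_pos_iff hopen hcompl 0 ω20).2 h20.2
  have hb1nn20 := bB_nonneg hopen hcompl 1 ω20
  have hf1w20 : fF U 1 ω20 = 0 := by
    rcases zero_exists hopen hcompl hne ω20 with h | h | h
    · exact absurd h (ne_of_gt ((fF_pos_iff hopen hcompl 0 ω20).2 h20.2))
    · exact h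
    · exact absurd h (ne_of_gt ((fF_pos_iff hopen hcompl 2 ω20).2 h20.1))
  set δ : ℝ := -(bB U 2 ω20)/3 with hδdef
  have hHω20 : HH U ω20 = ((δ : ℝ) : 𝕋) := HH_eq1 ω20 hf1w20
  have hδ1 : -(1/3) < δ := by rw [hδdef]; linarith
  have hδ2 : δ < 0 := by rw [hδdef]; linarith
  -- lift values at the four nodes
  have h0m : (0:ℝ) ∈ Icc (0:ℝ) 1 := ⟨le_refl 0, zero_le_one⟩
  have h14m : (1/4:ℝ) ∈ Icc (0:ℝ) 1 := by constructor <;> norm_num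
  have h12m : (1/2:ℝ) ∈ Icc (0:ℝ) 1 := by constructor <;> norm_num
  have h1m : (1:ℝ) ∈ Icc (0:ℝ) 1 := ⟨zero_le_one, le_refl 1⟩
  obtain ⟨m0, hm0⟩ := (coe_T_eq α (ℓ 0)).1
    (((hqI 0 h0m ω01 (by exact hγ0)).trans hHω01).symm)
  obtain ⟨m1, hm1⟩ := (coe_T_eq β (ℓ (1/4))).1
    (((hqI (1/4) h14m ω12 (by exact hγ14)).trans hHω12).symm)
  obtain ⟨m2, hm2⟩ := (coe_T_eq δ (ℓ (1/2))).1
    (((hqI (1/2) h12m ω20 (by exact hγ12)).trans hHω20).symm)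
  obtain ⟨m3, hm3⟩ := (coe_T_eq α (ℓ 1)).1
    (((hqI 1 h1m ω01 (by exact hγ1)).trans hHω01).symm)
  -- windows
  have win1 : ∀ t ∈ Icc (0:ℝ) (1/4), ∃ n : ℤ, ℓ t ∈ Ioo ((0:ℝ) + n) (0 + n + 2/3) := by
    intro t ht
    have ht' : t ∈ Icc (0:ℝ) 1 := ⟨ht.1, by linarith [ht.2]⟩
    exact HH_win1 hopen hcompl hne (γ ⟨t, ht'⟩) (hseg1 ⟨t, ht'⟩ ht.2) (ℓ t) (hqℓ t ht')
  have win2 : ∀ t ∈ Icc (1/4:ℝ) (1/2), ∃ n : ℤ, ℓ t ∈ Ioo ((1/3:ℝ) + n) (1/3 + n + 2/3) := by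
    intro t ht
    have ht' : t ∈ Icc (0:ℝ) 1 := ⟨by linarith [ht.1], by linarith [ht.2]⟩
    exact HH_win2 hopen hcompl hne (γ ⟨t, ht'⟩) (hseg2 ⟨t, ht'⟩ ht.1 ht.2) (ℓ t) (hqℓ t ht')
  have win0 : ∀ t ∈ Icc (1/2:ℝ) 1, ∃ n : ℤ, ℓ t ∈ Ioo ((2/3:ℝ) + n) (2/3 + n + 2/3) := by
    intro t ht
    have ht' : t ∈ Icc (0:ℝ) 1 := ⟨by linarith [ht.1], ht.2⟩
    exact HH_win0 hopen hcompl hne (γ ⟨t, ht'⟩) (hseg3 ⟨t, ht'⟩ ht.1) (ℓ t) (hqℓ t ht')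
  -- chain the windows
  have memℓ0 : ℓ 0 ∈ Ioo ((0:ℝ) + m0) (0 + m0 + 2/3) := by
    rw [hm0]; constructor <;> [linarith; linarith]
  obtain ⟨n1, hn1⟩ := win1 (1/4) ⟨by norm_num, le_refl _⟩
  have e1 : m0 = n1 := window_lemma (by norm_num) hℓc.continuousOn win1 memℓ0 hn1
  have hmm1 : m1 = n1 := by
    obtain ⟨hl, hr⟩ := hn1
    rw [hm1] at hl hr
    exact int_eq_of_casts (by linarith) (by linarith)
  have hm1' : ℓ (1/4) = β + m0 := by rw [hm1, hmm1, ← e1]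
  have mem2a : ℓ (1/4) ∈ Ioo ((1/3:ℝ) + m0) (1/3 + m0 + 2/3) := by
    rw [hm1']; constructor <;> [linarith; linarith]
  obtain ⟨n2, hn2⟩ := win2 (1/2) ⟨by norm_num, le_refl _⟩
  have e2 : m0 = n2 := window_lemma (by norm_num) hℓc.continuousOn win2 mem2a hn2
  have hmm2 : m2 = m0 + 1 := by
    obtain ⟨hl, hr⟩ := hn2
    rw [hm2] at hl hr
    rw [← e2] at hl hr
    refine int_eq_of_casts ?_ ?_ <;> push_cast <;> [linarith; linarith]
  have hm2' : ℓ (1/2) = δ + ((m0:ℝ) + 1) := by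
    rw [hm2, hmm2]; push_cast; ring
  have mem0a : ℓ (1/2) ∈ Ioo ((2/3:ℝ) + m0) (2/3 + m0 + 2/3) := by
    rw [hm2']; constructor <;> [linarith; linarith]
  obtain ⟨n3, hn3⟩ := win0 1 ⟨by norm_num, le_refl _⟩
  have e3 : m0 = n3 := window_lemma (by norm_num) hℓc.continuousOn win0 mem0a hn3
  have hmm3 : m3 = m0 + 1 := by
    obtain ⟨hl, hr⟩ := hn3
    rw [hm3] at hl hr
    rw [← e3] at hl hr
    refine int_eq_of_casts ?_ ?_ <;> push_cast <;> [linarith; linarith]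
  have : α + ((m0:ℝ) + 1) = α + (m0:ℝ) := by
    have h1 : ℓ 1 = α + ((m0:ℝ) + 1) := by rw [hm3, hmm3]; push_cast; ring
    rw [← h1, hℓeq, hm0]
  linarith

end
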